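/- If subspaces {W_i}_{i=1}^n of R^d with orthogonal projections {P_i}_{i=1}^n do phase retrieval, then for every nonzero x ∈ R^d, the vectors {P_i x}_{i=1}^n span R^d. -/

import Mathlib

open scoped InnerProductSpace

/-- (Edidin) If subspaces do phase retrieval, then for every nonzero `x` the
projections of `x` span `ℝ^d`. -/
theorem phase_retrieval_projections_span (d n : ℕ)
    (W : Fin n → Submodule ℝ (EuclideanSpace ℝ (Fin d)))
    (hPR : ∀ x y : EuclideanSpace ℝ (Fin d),
      (∀ i, ‖((W i).orthogonalProjectionOnto x : EuclideanSpace ℝ (Fin d))‖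
        = ‖((W i).orthogonalProjectionOnto y : EuclideanSpace ℝ (Fin d))‖) → x = y ∨ x = -y) :
    ∀ x : EuclideanSpace ℝ (Fin d), x ≠ 0 →
      Submodule.span ℝ
        (Set.range fun i => ((W i).orthogonalProjectionOnto x : EuclideanSpace ℝ (Fin d))) = ⊤ := by
  intro x hx
  by_contra hspan
  set S := Submodule.span ℝ
      (Set.range fun i => ((W i).orthogonalProjectionOnto x : EuclideanSpace ℝ (Fin d))) with hS
  -- Sᗮ ≠ ⊥
  have hbot : Sᗮ ≠ ⊥ := by
    intro h
    exact hspan (Submodule.orthogonal_eq_bot_iff.mp h)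
  obtain ⟨u, hu, hu0⟩ := Submodule.exists_mem_ne_zero_of_ne_bot hbot
  -- u is orthogonal to each P_i x
  have hperp : ∀ i, ⟪((W i).orthogonalProjectionOnto x : EuclideanSpace ℝ (Fin d)), u⟫_ℝ = 0 := by
    intro i
    have hmem : ((W i).orthogonalProjectionOnto x : EuclideanSpace ℝ (Fin d)) ∈ S :=
      Submodule.subset_span ⟨i, rfl⟩
    exact hu _ hmem
  -- cross term vanishes
  have hcross : ∀ i, ⟪((W i).orthogonalProjectionOnto x : EuclideanSpace ℝ (Fin d)),
      ((W i).orthogonalProjectionOnto u : EuclideanSpace ℝ (Fin d))⟫_ℝ = 0 := by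
    intro i
    have h1 : ⟪u - ((W i).orthogonalProjectionOnto u : EuclideanSpace ℝ (Fin d)),
        ((W i).orthogonalProjectionOnto x : EuclideanSpace ℝ (Fin d))⟫_ℝ = 0 :=
      (W i).starProjection_inner_eq_zero u _ (Submodule.coe_mem _)
    have h2 : ⟪u, ((W i).orthogonalProjectionOnto x : EuclideanSpace ℝ (Fin d))⟫_ℝ = 0 := by
      rw [real_inner_comm]; exact hperp i
    rw [inner_sub_left, h2] at h1
    rw [real_inner_comm]
    linarith
  have hnorm : ∀ i, ‖((W i).orthogonalProjectionOnto (x + u) : EuclideanSpace ℝ (Fin d))‖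
      = ‖((W i).orthogonalProjectionOnto (x - u) : EuclideanSpace ℝ (Fin d))‖ := by
    intro i
    have hsq : ‖((W i).orthogonalProjectionOnto (x + u) : EuclideanSpace ℝ (Fin d))‖ ^ 2
        = ‖((W i).orthogonalProjectionOnto (x - u) : EuclideanSpace ℝ (Fin d))‖ ^ 2 := by
      rw [map_add, map_sub]
      push_cast
      rw [norm_add_sq_real, norm_sub_sq_real, hcross i]
      ring
    exact (sq_eq_sq₀ (norm_nonneg _) (norm_nonneg _)).mp hsq
  have hcase := hPR (x + u) (x - u) hnorm
  rcases hcase with h | h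
  · have : u = 0 := by
      have := sub_eq_zero.mpr h
      have h2 : (2 : ℝ) • u = 0 := by
        have : x + u - (x - u) = (2 : ℝ) • u := by
          simp [two_smul]
        rw [← this, sub_eq_zero]; exact h
      simpa using smul_eq_zero.mp h2 |>.resolve_left (by norm_num)
    exact hu0 this
  · have : x = 0 := by
      have h2 : (2 : ℝ) • x = 0 := by
        have heq : x + u + (x - u) = (2 : ℝ) • x := by
          simp [two_smul]
        rw [← heq]
        rw [h]; abel
      simpa using smul_eq_zero.mp h2 |>.resolve_left (by norm_num)
    exact hx this
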